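/- Let k_1,...,k_{N_1} ∈ ℂ and b ∈ ℂ with k_i + b ≠ 0 for all i, let Γ_D = Diag(k_1,...,k_{N_1}), and let Γ_J(b) be the N_2×N_2 lower Jordan block with b on the diagonal and 1 on the subdiagonal. Then the N_1×N_2 matrix G with entries G_{ij} = -(-1/(k_i+b))^j satisfies G Γ_J(b)^T + Γ_D G = 𝟙_D · e_1^T, where 𝟙_D = (1,...,1)^T of length N_1 and e_1 = (1,0,...,0)^T of length N_2. -/

import Mathlib

open Matrix

/-- The N×N lower Jordan block with `a` on the diagonal and 1 on the subdiagonal. -/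
def jordanBlock (N : ℕ) (a : ℂ) : Matrix (Fin N) (Fin N) ℂ :=
  Matrix.of fun i j => if (i : ℕ) = j then a else if (i : ℕ) = (j : ℕ) + 1 then 1 else 0

/-- The N₁×N₂ matrix G with entries G_{ij} = -(-1/(k_i+b))^j (1-based j)
satisfies G Γ_J(b)ᵀ + Γ_D G = 𝟙_D e₁ᵀ. -/
theorem cauchy_elementary_diag_jordan (N₁ N₂ : ℕ) (k : Fin N₁ → ℂ) (b : ℂ)
    (hk : ∀ i, k i + b ≠ 0) :
    let G : Matrix (Fin N₁) (Fin N₂) ℂ :=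
      Matrix.of fun i j => -((-1 / (k i + b)) ^ ((j : ℕ) + 1))
    G * (jordanBlock N₂ b)ᵀ + Matrix.diagonal k * G
      = Matrix.of fun (_ : Fin N₁) (j : Fin N₂) => if (j : ℕ) = 0 then (1 : ℂ) else 0 := by
  intro G
  ext i j
  have hne := hk i
  simp only [Matrix.add_apply, Matrix.mul_apply, Matrix.transpose_apply, jordanBlock,
    Matrix.of_apply, Matrix.diagonal_apply, ite_mul, zero_mul, G]
  rw [Finset.sum_ite_eq Finset.univ i (fun l => k i * -((-1 / (k l + b)) ^ ((j:ℕ)+1)))]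
  simp only [Finset.mem_univ, if_true]
  set x : ℂ := -1 / (k i + b) with hxdef
  have hx : x * (k i + b) = -1 := by rw [hxdef]; field_simp
  have key : ∀ l : Fin N₂, (-(x ^ ((l:ℕ)+1))) *
      (if (j:ℕ)=(l:ℕ) then b else if (j:ℕ)=(l:ℕ)+1 then 1 else 0)
      = (if l = j then (-(x ^ ((j:ℕ)+1)))*b else 0)
        + (if (j:ℕ)=(l:ℕ)+1 then -(x ^ ((l:ℕ)+1)) else 0) := by
    intro l
    rcases eq_or_ne ((j:ℕ)) ((l:ℕ)) with h | h
    · have hlj : l = j := Fin.ext h.symm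
      have h2 : ¬ ((j:ℕ) = (l:ℕ)+1) := by omega
      simp [hlj, h, h2]
    · have hlj : l ≠ j := fun e => h (by rw [e])
      simp only [h, if_false, hlj, zero_add]
      split_ifs <;> ring
  rw [Finset.sum_congr rfl fun l _ => key l, Finset.sum_add_distrib,
    Finset.sum_ite_eq' Finset.univ j (fun _ => (-(x ^ ((j:ℕ)+1)))*b)]
  simp only [Finset.mem_univ, if_true]
  rcases j with ⟨jv, hj⟩
  cases jv with
  | zero =>
      have : ∀ l : Fin N₂, (if (((⟨0, hj⟩ : Fin N₂)):ℕ) = (l:ℕ)+1 then -(x ^ ((l:ℕ)+1)) else 0)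
          = 0 := by intro l; simp
      rw [Finset.sum_congr rfl fun l _ => this l, Finset.sum_const_zero]
      rw [show (((⟨0, hj⟩ : Fin N₂)):ℕ) = 0 from rfl, if_pos rfl]
      linear_combination -hx
  | succ m =>
      have hm : m < N₂ := Nat.lt_of_succ_lt hj
      have hcast : (((⟨m+1, hj⟩ : Fin N₂)):ℕ) = m+1 := rfl
      have : ∀ l : Fin N₂, (if (((⟨m+1, hj⟩ : Fin N₂)):ℕ) = (l:ℕ)+1 then -(x ^ ((l:ℕ)+1)) else 0)
          = (if l = ⟨m, hm⟩ then -(x ^ (m+1)) else 0) := by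
        intro l
        rcases eq_or_ne l (⟨m, hm⟩ : Fin N₂) with h | h
        · simp [h, hcast]
        · have hne' : (m : ℕ) ≠ (l : ℕ) := fun e => h (Fin.ext e.symm)
          have : ¬ (m+1 = (l:ℕ)+1) := fun e => hne' (Nat.succ_injective e)
          simp [h, hcast, this, hne']
      rw [Finset.sum_congr rfl fun l _ => this l,
        Finset.sum_ite_eq' Finset.univ (⟨m, hm⟩ : Fin N₂) (fun _ => -(x ^ (m+1)))]
      simp only [Finset.mem_univ, if_true, hcast]
      have hpow : x ^ (m+1+1) = x ^ (m+1) * x := by ring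
      rw [hpow]
      have : ¬ ((m+1 : ℕ) = 0) := by omega
      simp only [this, if_false]
      linear_combination (-(x ^ (m+1))) * hx
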